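/- arXiv:1708.00191 — 3 statements merged into one kernel-verified Lean document; each statement's English description precedes it below -/
import Mathlib

section
/- Let T : [0,1] → [0,1] be piecewise C² expanding with contraction bound λ ∈ (0,1), let γ ∈ [0,1) satisfy γ < 1 − λ, and fix an integer p ≥ 1. For each n ≥ 2 let T̂ be the globally coupled map on [0,1]^n built from T with coupling γ, and let z_n ∈ [0,1]^n be a periodic point of T̂ of period p such that every coordinate of every orbit point z_n, T̂(z_n), …, T̂^{p−1}(z_n) lies in the interior of one of the partition intervals of T (so that T̂^p is differentiable at z_n). Then the extremal index θ_n(z_n) := 1 − |det D(T̂^p)(z_n)|^{−1} satisfies lim_{n→∞} θ_n(z_n) = 1. -/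
open MeasureTheory Set Filter

/-- The globally coupled map `T̂` on `[0,1]^n` built from a local map `T` with
coupling strength `γ`: `T̂(x)_i = (1-γ)·T(x_i) + (γ/n)·∑_j T(x_j)`. -/
noncomputable def coupledMap (n : ℕ) (γ : ℝ) (T : ℝ → ℝ) :
    (Fin n → ℝ) → (Fin n → ℝ) :=
  fun x i => (1 - γ) * T (x i) + (γ / n) * ∑ j, T (x j)

/-- The unit cube `[0,1]^n`. -/
def unitCube (n : ℕ) : Set (Fin n → ℝ) := {x | ∀ i, x i ∈ Icc (0:ℝ) 1}

/-- `T : [0,1] → [0,1]` is piecewise `C²` expanding with contraction bound `lam`,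
with partition points `a 0 = 0 < a 1 < ⋯ < a q = 1`: on the interior of each
partition interval `T` is injective, coincides with a `C²` function (hence is `C²`
extendable with continuity, together with its derivatives, to the closure), and
satisfies `|T'| ≥ 1/lam`. -/
def PiecewiseC2Expanding (T : ℝ → ℝ) (lam : ℝ) (q : ℕ) (a : ℕ → ℝ) : Prop :=
  1 ≤ q ∧ a 0 = 0 ∧ a q = 1 ∧ (∀ l < q, a l < a (l + 1)) ∧
  (∀ l < q, Set.InjOn T (Ioo (a l) (a (l + 1)))) ∧
  (∀ l < q, ∃ g : ℝ → ℝ, ContDiff ℝ 2 g ∧ Set.EqOn T g (Ioo (a l) (a (l + 1)))) ∧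
  (∀ l < q, ∀ x ∈ Ioo (a l) (a (l + 1)), 1 / lam ≤ |deriv T x|)

/-- The derivative of the coupled map at a point with coordinate derivatives `d`. -/
noncomputable def cLin (n : ℕ) (γ : ℝ) (d : Fin n → ℝ) :
    (Fin n → ℝ) →L[ℝ] (Fin n → ℝ) :=
  ContinuousLinearMap.pi fun i =>
    (1 - γ) • (d i • ContinuousLinearMap.proj i)
      + (γ / (n : ℝ)) • ∑ j, d j • (ContinuousLinearMap.proj (R := ℝ)
          (φ := fun _ : Fin n => ℝ) j)

lemma hasFDerivAt_coupledMap (n : ℕ) (γ : ℝ) (T : ℝ → ℝ) (x : Fin n → ℝ)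
    (hd : ∀ i, HasDerivAt T (deriv T (x i)) (x i)) :
    HasFDerivAt (coupledMap n γ T) (cLin n γ (fun i => deriv T (x i))) x := by
  unfold coupledMap cLin
  refine hasFDerivAt_pi.2 fun i => ?_
  have h1 : ∀ j : Fin n, HasFDerivAt (fun y : Fin n → ℝ => T (y j))
      (deriv T (x j) • ContinuousLinearMap.proj (R := ℝ)
        (φ := fun _ : Fin n => ℝ) j) x := fun j =>
    (hd j).comp_hasFDerivAt x (hasFDerivAt_apply j x)
  have hsum : HasFDerivAt (fun y : Fin n → ℝ => ∑ j, T (y j))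
      (∑ j, deriv T (x j) • (ContinuousLinearMap.proj (R := ℝ)
        (φ := fun _ : Fin n => ℝ) j)) x :=
    HasFDerivAt.fun_sum fun j _ => h1 j
  exact ((h1 i).const_mul (1 - γ)).add (hsum.const_mul (γ / n))

lemma det_cLin {n : ℕ} (hn : 0 < n) {γ : ℝ} (hγ : 1 - γ ≠ 0) (d : Fin n → ℝ) :
    (cLin n γ d).det = (1 - γ) ^ (n - 1) * ∏ j, d j := by
  classical
  have hn' : (n : ℝ) ≠ 0 := Nat.cast_ne_zero.2 hn.ne'
  have hmat : LinearMap.toMatrix'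
      ((cLin n γ d) : (Fin n → ℝ) →ₗ[ℝ] (Fin n → ℝ)) =
      (Matrix.of fun i j : Fin n => (if i = j then (1 - γ) else 0) + γ / n) *
        Matrix.diagonal d := by
    ext i j
    simp [LinearMap.toMatrix'_apply, cLin, Matrix.mul_apply, Matrix.diagonal,
      mul_ite, mul_zero, mul_one, Finset.sum_ite_eq, Finset.sum_ite_eq',
      ContinuousLinearMap.proj_apply, smul_eq_mul, Pi.single_apply]
    by_cases h : i = j <;> simp [h] <;> ring
  have hdet : (cLin n γ d).det =
      ((Matrix.of fun i j : Fin n => (if i = j then (1 - γ) else 0) + γ / n).det)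
        * ∏ j, d j := by
    rw [ContinuousLinearMap.det, ← LinearMap.det_toMatrix', hmat, Matrix.det_mul,
      Matrix.det_diagonal]
  rw [hdet]
  congr 1
  have hC : (Matrix.of fun i j : Fin n => (if i = j then (1 - γ) else 0) + γ / n)
      = (1 - γ) • (1 + Matrix.replicateCol Unit (fun _ => γ / (n * (1 - γ)))
          * Matrix.replicateRow Unit (fun _ => (1 : ℝ))) := by
    ext i j
    by_cases h : i = j <;>
      simp [h, Matrix.mul_apply, Matrix.one_apply, Matrix.col, Matrix.row] <;>
      field_simp <;> ring
  rw [hC, Matrix.det_smul, Matrix.det_one_add_replicateCol_mul_replicateRow]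
  simp only [dotProduct, one_mul, Finset.sum_const, Finset.card_univ,
    Fintype.card_fin, nsmul_eq_mul]
  have hpow : (1 - γ) ^ n = (1 - γ) ^ (n - 1) * (1 - γ) := by
    conv_lhs => rw [← Nat.succ_pred_eq_of_pos hn]
    rw [pow_succ, Nat.pred_eq_sub_one]
  rw [hpow]
  field_simp
  ring

/-- for a fixed local piecewise `C²` expanding map `T` with contraction
bound `lam`, a coupling `γ ∈ [0,1)` with `γ < 1 - lam`, and a fixed period `p ≥ 1`,
if for each `n ≥ 2` the point `z n ∈ [0,1]^n` is a periodic point of period `p` of the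
globally coupled map whose whole orbit has all coordinates in the interiors of the
partition intervals of `T`, then the extremal index
`θ_n(z_n) = 1 - |det D(T̂^p)(z_n)|⁻¹` tends to `1` as `n → ∞`. -/
theorem extremal_index_tendsto_one
    (T : ℝ → ℝ) (lam γ : ℝ) (p : ℕ)
    (hlam : lam ∈ Ioo (0:ℝ) 1) (hγ0 : 0 ≤ γ) (hγ1 : γ < 1) (hγlam : γ < 1 - lam)
    (hp : 1 ≤ p)
    (hT : Set.MapsTo T (Icc 0 1) (Icc 0 1))
    (q : ℕ) (a : ℕ → ℝ) (hpw : PiecewiseC2Expanding T lam q a)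
    (z : (n : ℕ) → (Fin n → ℝ))
    (hz_mem : ∀ n, 2 ≤ n → z n ∈ unitCube n)
    (hz_per : ∀ n, 2 ≤ n → (coupledMap n γ T)^[p] (z n) = z n)
    (hz_int : ∀ n, 2 ≤ n → ∀ t < p, ∀ i : Fin n,
      ∃ l < q, ((coupledMap n γ T)^[t] (z n)) i ∈ Ioo (a l) (a (l + 1))) :
    Filter.Tendsto
      (fun n : ℕ => 1 - |(fderiv ℝ ((coupledMap n γ T)^[p]) (z n)).det|⁻¹)
      Filter.atTop (nhds 1) := by
  obtain ⟨hlam0, hlam1⟩ := hlam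
  have h1γ : (0:ℝ) < 1 - γ := by linarith
  have hlamne : lam ≠ 0 := ne_of_gt hlam0
  have hγne : (1:ℝ) - γ ≠ 0 := ne_of_gt h1γ
  -- differentiability of T at interior points, with the expansion bound
  have hTd : ∀ y : ℝ, (∃ l, l < q ∧ y ∈ Ioo (a l) (a (l+1))) →
      HasDerivAt T (deriv T y) y ∧ 1 / lam ≤ |deriv T y| := by
    rintro y ⟨l, hl, hy⟩
    obtain ⟨-, -, -, -, -, hC2, hbd⟩ := hpw
    obtain ⟨g, hg, hEq⟩ := hC2 l hl
    have hmem : Ioo (a l) (a (l+1)) ∈ nhds y := isOpen_Ioo.mem_nhds hy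
    have heq : T =ᶠ[nhds y] g := Filter.eventuallyEq_of_mem hmem hEq
    have hgd : HasDerivAt g (deriv g y) y :=
      ((hg.differentiable (by norm_num)).differentiableAt).hasDerivAt
    have hTd' : HasDerivAt T (deriv g y) y := hgd.congr_of_eventuallyEq heq
    rw [← heq.deriv_eq] at hTd'
    exact ⟨hTd', hbd l hl y hy⟩
  -- derivative of the iterates, with determinant lower bound
  have key : ∀ n, 2 ≤ n → ∀ t, t ≤ p → ∃ L : (Fin n → ℝ) →L[ℝ] (Fin n → ℝ),
      HasFDerivAt ((coupledMap n γ T)^[t]) L (z n) ∧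
        ((1 - γ) ^ (n - 1) * (1 / lam) ^ n) ^ t ≤ |L.det| := by
    intro n hn t
    induction t with
    | zero =>
      intro _
      refine ⟨ContinuousLinearMap.id ℝ _, ?_, ?_⟩
      · rw [Function.iterate_zero]
        exact hasFDerivAt_id (z n)
      · simp [ContinuousLinearMap.det]
    | succ t ih =>
      intro ht
      obtain ⟨L, hL, hLd⟩ := ih (Nat.le_of_succ_le ht)
      set x := (coupledMap n γ T)^[t] (z n) with hx
      have hint : ∀ i, ∃ l, l < q ∧ x i ∈ Ioo (a l) (a (l+1)) := by
        intro i
        obtain ⟨l, hl, hmem⟩ := hz_int n hn t (by omega) i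
        exact ⟨l, hl, hmem⟩
      have hder : ∀ i, HasDerivAt T (deriv T (x i)) (x i) := fun i =>
        (hTd (x i) (hint i)).1
      have hstep := hasFDerivAt_coupledMap n γ T x hder
      have hcomp : HasFDerivAt ((coupledMap n γ T)^[t+1])
          ((cLin n γ fun i => deriv T (x i)).comp L) (z n) := by
        rw [Function.iterate_succ']
        exact hstep.comp (z n) hL
      refine ⟨_, hcomp, ?_⟩
      have hdetmul : ((cLin n γ fun i => deriv T (x i)).comp L).det
          = (cLin n γ fun i => deriv T (x i)).det * L.det := by
        simp [ContinuousLinearMap.det, ContinuousLinearMap.coe_comp,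
          LinearMap.det_comp]
      have hstepdet : (1 - γ) ^ (n - 1) * (1 / lam) ^ n ≤
          |(cLin n γ fun i => deriv T (x i)).det| := by
        rw [det_cLin (by omega) hγne, abs_mul, abs_pow, abs_of_pos h1γ,
          Finset.abs_prod]
        refine mul_le_mul_of_nonneg_left ?_ (pow_nonneg h1γ.le _)
        calc (1/lam)^n = ∏ _j : Fin n, (1/lam) := by simp
          _ ≤ ∏ j, |deriv T (x j)| :=
            Finset.prod_le_prod (fun _ _ => by positivity)
              (fun j _ => (hTd (x j) (hint j)).2)
      have h0 : (0:ℝ) ≤ (1 - γ) ^ (n - 1) * (1 / lam) ^ n :=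
        mul_nonneg (pow_nonneg h1γ.le _) (pow_nonneg (by positivity) _)
      rw [hdetmul, abs_mul, pow_succ]
      calc ((1 - γ)^(n-1)*(1/lam)^n)^t * ((1-γ)^(n-1)*(1/lam)^n)
          ≤ |L.det| * |(cLin n γ fun i => deriv T (x i)).det| :=
            mul_le_mul hLd hstepdet h0 (abs_nonneg _)
        _ = |(cLin n γ fun i => deriv T (x i)).det| * |L.det| := mul_comm _ _
  -- the determinant inverse goes to zero
  set ρ := lam / (1 - γ) with hρ
  have hρ0 : 0 ≤ ρ := div_nonneg hlam0.le h1γ.le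
  have hρ1 : ρ < 1 := (div_lt_one h1γ).2 (by linarith)
  have hzero : Tendsto
      (fun n : ℕ => |(fderiv ℝ ((coupledMap n γ T)^[p]) (z n)).det|⁻¹)
      atTop (nhds 0) := by
    apply squeeze_zero' (Eventually.of_forall fun n => by positivity)
      ?_ (tendsto_pow_atTop_nhds_zero_of_lt_one hρ0 hρ1)
    filter_upwards [eventually_ge_atTop 2] with n hn
    obtain ⟨L, hL, hLd⟩ := key n hn p le_rfl
    rw [hL.fderiv]
    have hb0 : 0 < ((1 - γ) ^ (n - 1) * (1 / lam) ^ n) ^ p :=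
      pow_pos (mul_pos (pow_pos h1γ _) (pow_pos (by positivity) _)) _
    have hinv : |L.det|⁻¹ ≤ (((1 - γ) ^ (n - 1) * (1 / lam) ^ n) ^ p)⁻¹ :=
      inv_anti₀ hb0 hLd
    refine hinv.trans ?_
    obtain ⟨m, rfl⟩ : ∃ m, n = m + 1 := ⟨n - 1, by omega⟩
    have heq : (((1 - γ) ^ (m + 1 - 1) * (1 / lam) ^ (m+1)) ^ p)⁻¹
        = ((1 - γ) * ρ ^ (m+1)) ^ p := by
      rw [← inv_pow]
      congr 1
      rw [hρ]
      rw [div_pow, div_pow, Nat.add_sub_cancel]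
      field_simp
      ring
    rw [heq]
    have hc1 : (1 - γ) * ρ ^ (m+1) ≤ 1 := by
      have h1 : ρ ^ (m+1) ≤ 1 := pow_le_one₀ hρ0 hρ1.le
      nlinarith [pow_nonneg hρ0 (m+1)]
    have hc0 : 0 ≤ (1 - γ) * ρ ^ (m+1) := mul_nonneg h1γ.le (pow_nonneg hρ0 _)
    calc ((1 - γ) * ρ ^ (m+1)) ^ p ≤ (1 - γ) * ρ ^ (m+1) :=
        pow_le_of_le_one hc0 hc1 (by omega)
      _ ≤ ρ ^ (m+1) := by nlinarith [pow_nonneg hρ0 (m+1)]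
  have hfin : Tendsto
      (fun n : ℕ => 1 - |(fderiv ℝ ((coupledMap n γ T)^[p]) (z n)).det|⁻¹)
      atTop (nhds (1 - 0)) := Tendsto.sub tendsto_const_nhds hzero
  rw [sub_zero] at hfin
  exact hfin
end

section
/- Let n ≥ 2, λ ∈ (0,1), and γ ∈ [0,1) with λ < 1 − γ. Let T : [0,1] → [0,1] be piecewise C² expanding with contraction bound λ, and let T̂ be the globally coupled map on [0,1]^n built from T with coupling γ. Let h : [0,1]^n → [0,∞) be a bounded Borel function whose essential infimum h_inf (with respect to Lebesgue measure) is strictly positive, with essential supremum ‖h‖_∞, and let μ be the Borel measure on [0,1]^n with density h with respect to Lebesgue measure. Then limsup_{ν→0⁺} μ(S_ν ∩ T̂^{−1}(S_ν)) / μ(S_ν) ≤ λ^{n−1}·‖h‖_∞ / ((1−γ)^{n−1}·h_inf). -/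
open MeasureTheory Set Filter
open scoped ENNReal

/-- The synchronization neighborhood `S_ν = {x ∈ [0,1]^n : |x_i − x_j| ≤ ν ∀ i ≠ j}`. -/
def syncSet (n : ℕ) (ν : ℝ) : Set (Fin n → ℝ) :=
  {x ∈ unitCube n | ∀ i j, i ≠ j → |x i - x j| ≤ ν}

/-- The Borel measure on `[0,1]^n` with density `h` with respect to Lebesgue measure. -/
noncomputable def densityMeasure (n : ℕ) (h : (Fin n → ℝ) → ℝ) : Measure (Fin n → ℝ) :=
  (volume.restrict (unitCube n)).withDensity fun x => ENNReal.ofReal (h x)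

/-! ### Auxiliary lemmas -/

/-- A "slab": the coordinate `i` lies in `I` and all other coordinates lie in
an interval depending on `x i`. -/
def slab (m : ℕ) (i : Fin (m+1)) (I : Set ℝ) (S : ℝ → Set ℝ) : Set (Fin (m+1) → ℝ) :=
  {x | x i ∈ I ∧ ∀ j, j ≠ i → x j ∈ S (x i)}

lemma slab_eq (m : ℕ) (i : Fin (m+1)) (I : Set ℝ) (S : ℝ → Set ℝ) :
    slab m i I S = (MeasurableEquiv.piFinSuccAbove (fun _ => ℝ) i) ⁻¹'
      {p : ℝ × (Fin m → ℝ) | p.1 ∈ I ∧ ∀ j, p.2 j ∈ S p.1} := by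
  ext x
  simp only [slab, mem_preimage, MeasurableEquiv.piFinSuccAbove_apply, mem_setOf_eq,
    Fin.insertNthEquiv, Equiv.coe_fn_symm_mk, Fin.removeNth]
  constructor
  · rintro ⟨h1, h2⟩
    exact ⟨h1, fun j => h2 _ (Fin.succAbove_ne i j)⟩
  · rintro ⟨h1, h2⟩
    refine ⟨h1, fun j hj => ?_⟩
    obtain ⟨k, rfl⟩ := Fin.exists_succAbove_eq hj
    exact h2 k

lemma prodset_measurable {I : Set ℝ} (hI : MeasurableSet I) {S : ℝ → Set ℝ} {m : ℕ}
    (hSm : MeasurableSet {q : ℝ × ℝ | q.2 ∈ S q.1}) :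
    MeasurableSet {p : ℝ × (Fin m → ℝ) | p.1 ∈ I ∧ ∀ j, p.2 j ∈ S p.1} := by
  have : {p : ℝ × (Fin m → ℝ) | p.1 ∈ I ∧ ∀ j, p.2 j ∈ S p.1}
      = (Prod.fst ⁻¹' I) ∩ ⋂ j, (fun p : ℝ × (Fin m → ℝ) => ((p.1, p.2 j) : ℝ × ℝ)) ⁻¹' {q : ℝ × ℝ | q.2 ∈ S q.1} := by
    ext p; simp [mem_iInter]
  rw [this]
  refine (measurable_fst hI).inter (MeasurableSet.iInter fun j => ?_)
  exact hSm.preimage (measurable_fst.prodMk ((measurable_pi_apply j).comp measurable_snd))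

lemma slab_measurableSet (m : ℕ) (i : Fin (m+1)) {I : Set ℝ} (hI : MeasurableSet I)
    {S : ℝ → Set ℝ} (hSm : MeasurableSet {q : ℝ × ℝ | q.2 ∈ S q.1}) :
    MeasurableSet (slab m i I S) := by
  rw [slab_eq]
  exact (MeasurableEquiv.piFinSuccAbove (fun _ => ℝ) i).measurable (prodset_measurable hI hSm)

lemma vol_slab (m : ℕ) (i : Fin (m+1)) {I : Set ℝ} (hI : MeasurableSet I)
    {S : ℝ → Set ℝ} (hSm : MeasurableSet {q : ℝ × ℝ | q.2 ∈ S q.1})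
    {V : ℝ≥0∞} (hS : ∀ t, volume (S t) = V) :
    volume (slab m i I S) = volume I * V ^ m := by
  rw [slab_eq]
  have hmp := measurePreserving_piFinSuccAbove (fun _ : Fin (m+1) => (volume : Measure ℝ)) i
  rw [show (volume : Measure (Fin (m+1) → ℝ)) = Measure.pi fun _ => volume from volume_pi]
  rw [hmp.measure_preimage (prodset_measurable hI hSm).nullMeasurableSet]
  rw [Measure.prod_apply (prodset_measurable hI hSm)]
  have hslice : ∀ a : ℝ,
      (Measure.pi fun _ : Fin m => (volume : Measure ℝ))
        (Prod.mk a ⁻¹' {p : ℝ × (Fin m → ℝ) | p.1 ∈ I ∧ ∀ j, p.2 j ∈ S p.1})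
      = I.indicator (fun _ => V ^ m) a := by
    intro a
    by_cases ha : a ∈ I
    · have : (Prod.mk a ⁻¹' {p : ℝ × (Fin m → ℝ) | p.1 ∈ I ∧ ∀ j, p.2 j ∈ S p.1})
          = Set.pi univ (fun _ : Fin m => S a) := by
        ext y; simp [ha, Set.mem_pi]
      rw [this, Measure.pi_pi]
      simp [hS a, indicator_of_mem ha]
    · have : (Prod.mk a ⁻¹' {p : ℝ × (Fin m → ℝ) | p.1 ∈ I ∧ ∀ j, p.2 j ∈ S p.1}) = ∅ := by
        ext y; simp [ha]
      rw [this]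
      simp [indicator_of_notMem ha]
  simp only [hslice]
  rw [lintegral_indicator hI]
  simp [mul_comm]

lemma unitCube_eq (n : ℕ) : unitCube n = Set.pi univ (fun _ : Fin n => Icc (0:ℝ) 1) := by
  ext x; simp [unitCube, Set.mem_pi, Pi.le_def, forall_and]

lemma measurableSet_unitCube (n : ℕ) : MeasurableSet (unitCube n) := by
  rw [unitCube_eq]
  exact MeasurableSet.univ_pi fun _ => measurableSet_Icc

lemma volume_unitCube (n : ℕ) : volume (unitCube n) = 1 := by
  rw [unitCube_eq, volume_pi_pi]
  simp

lemma measurableSet_syncSet (n : ℕ) (ν : ℝ) : MeasurableSet (syncSet n ν) := by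
  have : syncSet n ν = unitCube n ∩ ⋂ (i) (j), {x : Fin n → ℝ | i ≠ j → |x i - x j| ≤ ν} := by
    ext x; simp [syncSet, mem_iInter]
  rw [this]
  refine (measurableSet_unitCube n).inter
    (MeasurableSet.iInter fun i => MeasurableSet.iInter fun j => ?_)
  by_cases hij : i = j
  · simp [hij]
  · have : {x : Fin n → ℝ | i ≠ j → |x i - x j| ≤ ν} = {x | |x i - x j| ≤ ν} := by
      ext x; simp [hij]
    rw [this]
    exact measurableSet_le (((measurable_pi_apply i).sub (measurable_pi_apply j)).abs)
      measurable_const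

lemma syncSet_subset_unitCube (n : ℕ) (ν : ℝ) : syncSet n ν ⊆ unitCube n := fun _ hx => hx.1

lemma densityMeasure_le (n : ℕ) (h : (Fin n → ℝ) → ℝ) {ES : ℝ}
    (hae : ∀ᵐ x ∂(volume.restrict (unitCube n)), h x ≤ ES)
    {A : Set (Fin n → ℝ)} (hA : MeasurableSet A) :
    densityMeasure n h A ≤ ENNReal.ofReal ES * volume (A ∩ unitCube n) := by
  rw [densityMeasure, withDensity_apply _ hA]
  calc ∫⁻ x in A, ENNReal.ofReal (h x) ∂(volume.restrict (unitCube n))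
      ≤ ∫⁻ _ in A, ENNReal.ofReal ES ∂(volume.restrict (unitCube n)) := by
        refine lintegral_mono_ae ?_
        exact ae_restrict_of_ae (hae.mono fun x hx => ENNReal.ofReal_le_ofReal hx)
    _ = ENNReal.ofReal ES * volume (A ∩ unitCube n) := by
        rw [lintegral_const, Measure.restrict_restrict hA, Measure.restrict_apply_univ]

lemma le_densityMeasure (n : ℕ) (h : (Fin n → ℝ) → ℝ) {EI : ℝ}
    (hae : ∀ᵐ x ∂(volume.restrict (unitCube n)), EI ≤ h x)
    {A : Set (Fin n → ℝ)} (hA : MeasurableSet A) (hAc : A ⊆ unitCube n) :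
    ENNReal.ofReal EI * volume A ≤ densityMeasure n h A := by
  rw [densityMeasure, withDensity_apply _ hA]
  calc ENNReal.ofReal EI * volume A
      = ∫⁻ _ in A, ENNReal.ofReal EI ∂(volume.restrict (unitCube n)) := by
        rw [lintegral_const, Measure.restrict_restrict hA, Measure.restrict_apply_univ,
          inter_eq_self_of_subset_left hAc]
    _ ≤ ∫⁻ x in A, ENNReal.ofReal (h x) ∂(volume.restrict (unitCube n)) := by
        refine lintegral_mono_ae ?_
        exact ae_restrict_of_ae (hae.mono fun x hx => ENNReal.ofReal_le_ofReal hx)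

lemma hSm_Icc (d₁ d₂ : ℝ) : MeasurableSet {q : ℝ × ℝ | q.2 ∈ Icc (q.1 + d₁) (q.1 + d₂)} := by
  have : {q : ℝ × ℝ | q.2 ∈ Icc (q.1 + d₁) (q.1 + d₂)}
      = {q : ℝ × ℝ | q.1 + d₁ ≤ q.2} ∩ {q : ℝ × ℝ | q.2 ≤ q.1 + d₂} := by
    ext q; simp [and_comm]
  rw [this]
  exact (measurableSet_le (measurable_fst.add_const d₁) measurable_snd).inter
    (measurableSet_le measurable_snd (measurable_fst.add_const d₂))

lemma hSm_Ioc (ν : ℝ) : MeasurableSet {q : ℝ × ℝ | q.2 ∈ Ioc q.1 (q.1 + ν)} := by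
  have : {q : ℝ × ℝ | q.2 ∈ Ioc q.1 (q.1 + ν)}
      = {q : ℝ × ℝ | q.1 < q.2} ∩ {q : ℝ × ℝ | q.2 ≤ q.1 + ν} := by
    ext q; simp [and_comm]
  rw [this]
  exact (measurableSet_lt measurable_fst measurable_snd).inter
    (measurableSet_le measurable_snd (measurable_fst.add_const ν))

lemma vol_Icc_slice (t d₁ d₂ : ℝ) : volume (Icc (t + d₁) (t + d₂)) = ENNReal.ofReal (d₂ - d₁) := by
  rw [Real.volume_Icc]; ring_nf

lemma vol_Ioc_slice (t ν : ℝ) : volume (Ioc t (t + ν)) = ENNReal.ofReal ν := by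
  rw [Real.volume_Ioc]; ring_nf

lemma syncSet_subset_iUnion_slab (m : ℕ) (ν : ℝ) :
    syncSet (m+1) ν ⊆ ⋃ i, slab m i (Icc 0 1) (fun t => Icc (t + 0) (t + ν)) := by
  intro x hx
  obtain ⟨hcube, hsync⟩ := hx
  obtain ⟨i, -, hi⟩ := Finset.exists_min_image Finset.univ x ⟨0, Finset.mem_univ 0⟩
  refine mem_iUnion.2 ⟨i, hcube i, fun j hj => ?_⟩
  have h1 : x i ≤ x j := hi j (Finset.mem_univ j)
  have h2 : |x j - x i| ≤ ν := hsync j i hj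
  constructor
  · linarith
  · have := abs_le.1 h2
    linarith [this.2]

lemma lowerSlab_subset_syncSet (m : ℕ) {ν : ℝ} (hν : 0 < ν) (i : Fin (m+1)) :
    slab m i (Icc 0 (1 - ν)) (fun t => Ioc t (t + ν)) ⊆ syncSet (m+1) ν := by
  rintro x ⟨hi, hj⟩
  have key : ∀ j, x i ≤ x j ∧ x j ≤ x i + ν := by
    intro j
    by_cases hji : j = i
    · subst hji; constructor <;> linarith
    · have := hj j hji
      exact ⟨le_of_lt this.1, this.2⟩
  constructor
  · intro j
    obtain ⟨h1, h2⟩ := key j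
    exact ⟨by linarith [hi.1], by linarith [hi.2]⟩
  · intro j k hjk
    obtain ⟨h1, h2⟩ := key j
    obtain ⟨h3, h4⟩ := key k
    rw [abs_le]
    constructor <;> linarith

lemma lowerSlab_disjoint (m : ℕ) (ν : ℝ) :
    Pairwise (Function.onFun Disjoint
      (fun i => slab m i (Icc 0 (1 - ν)) (fun t => Ioc t (t + ν)))) := by
  intro i j hij
  refine Set.disjoint_left.2 ?_
  rintro x ⟨-, hx1⟩ ⟨-, hx2⟩
  have h1 : x i < x j := (hx1 j (Ne.symm hij)).1
  have h2 : x j < x i := (hx2 i hij).1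
  linarith

lemma mvt_expansion_lt {T : ℝ → ℝ} {lam : ℝ} (hlam : 0 < lam) {A B : ℝ}
    (g : ℝ → ℝ) (hg : ContDiff ℝ 2 g) (heq : Set.EqOn T g (Ioo A B))
    (hder : ∀ x ∈ Ioo A B, 1 / lam ≤ |deriv T x|)
    {u v : ℝ} (hu : u ∈ Ioo A B) (hv : v ∈ Ioo A B) (huv : u < v) :
    |u - v| ≤ lam * |T u - T v| := by
  have hdiff : Differentiable ℝ g := hg.differentiable two_ne_zero
  obtain ⟨c, hc, hc2⟩ := exists_hasDerivAt_eq_slope g (deriv g) huv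
    hg.continuous.continuousOn (fun x _ => (hdiff x).hasDerivAt)
  have hcAB : c ∈ Ioo A B := ⟨lt_trans hu.1 hc.1, lt_trans hc.2 hv.2⟩
  have hTg : deriv T c = deriv g c :=
    Filter.EventuallyEq.deriv_eq (heq.eventuallyEq_of_mem (isOpen_Ioo.mem_nhds hcAB))
  have h1 : 1 / lam ≤ |deriv g c| := hTg ▸ hder c hcAB
  rw [hc2] at h1
  have hvu : (0:ℝ) < v - u := by linarith
  rw [abs_div, abs_of_pos hvu, div_le_div_iff₀ hlam hvu] at h1
  have : |u - v| = v - u := by rw [abs_sub_comm, abs_of_pos hvu]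
  rw [this, heq hu, heq hv, abs_sub_comm]
  calc v - u = lam * ((v - u) / lam) := by field_simp
    _ ≤ lam * |g v - g u| := by
        refine mul_le_mul_of_nonneg_left ?_ (le_of_lt hlam)
        rw [div_le_iff₀ hlam]
        linarith [h1]

lemma mvt_expansion {T : ℝ → ℝ} {lam : ℝ} (hlam : 0 < lam) {A B : ℝ}
    (g : ℝ → ℝ) (hg : ContDiff ℝ 2 g) (heq : Set.EqOn T g (Ioo A B))
    (hder : ∀ x ∈ Ioo A B, 1 / lam ≤ |deriv T x|)
    {u v : ℝ} (hu : u ∈ Ioo A B) (hv : v ∈ Ioo A B) :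
    |u - v| ≤ lam * |T u - T v| := by
  rcases lt_trichotomy u v with hlt | heq' | hgt
  · exact mvt_expansion_lt hlam g hg heq hder hu hv hlt
  · subst heq'; simp [abs_nonneg, mul_nonneg hlam.le (abs_nonneg _)]
  · rw [abs_sub_comm, abs_sub_comm (T u)]
    exact mvt_expansion_lt hlam g hg heq hder hv hu hgt

lemma numerator_subset (m q : ℕ) (a : ℕ → ℝ) {lam γ ν : ℝ}
    (hlam : lam ∈ Ioo (0:ℝ) 1) (hγ : γ ∈ Ico (0:ℝ) 1) (hν : 0 < ν)
    {T : ℝ → ℝ} (hpw : PiecewiseC2Expanding T lam q a) :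
    syncSet (m+1) ν ∩ (coupledMap (m+1) γ T) ⁻¹' (syncSet (m+1) ν) ⊆
      syncSet (m+1) (lam * ν / (1 - γ)) ∪
      ⋃ l ∈ Finset.range (q+1),
        slab m 0 (Icc (a l - 2*ν) (a l + 2*ν)) (fun t => Icc (t + -ν) (t + ν)) := by
  rintro x ⟨⟨hcube, hsync⟩, hpre⟩
  have hsync0 : ∀ j, |x j - x 0| ≤ ν := by
    intro j
    by_cases hj : j = 0
    · subst hj; simp [hν.le]
    · exact hsync j 0 hj
  by_cases hbad : ∃ l ∈ Finset.range (q+1), |x 0 - a l| ≤ 2*ν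
  · right
    obtain ⟨l, hl, hxl⟩ := hbad
    refine mem_biUnion hl ?_
    have := abs_le.1 hxl
    refine ⟨⟨by linarith [this.1], by linarith [this.2]⟩, fun j hj => ?_⟩
    have := abs_le.1 (hsync0 j)
    exact ⟨by linarith [this.1], by linarith [this.2]⟩
  · left
    push_neg at hbad
    obtain ⟨hq, ha0, haq, hmono, hinj, hgex, hder⟩ := hpw
    have hx00 : (0:ℝ) ≤ x 0 := (hcube 0).1
    have hx01 : x 0 ≤ 1 := (hcube 0).2
    have h0mem : (0:ℕ) ∈ Finset.range (q+1) := by simp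
    have ha0lt : a 0 < x 0 := by
      have := hbad 0 h0mem
      rw [ha0] at this ⊢
      rw [abs_of_nonneg (by linarith)] at this
      linarith
    set F := (Finset.range (q+1)).filter (fun l => a l < x 0) with hF
    have hF0 : (0:ℕ) ∈ F := Finset.mem_filter.2 ⟨h0mem, ha0lt⟩
    have hFne : F.Nonempty := ⟨0, hF0⟩
    set l := F.max' hFne with hldef
    have hlF : l ∈ F := F.max'_mem hFne
    have hlq1 : l ∈ Finset.range (q+1) := (Finset.mem_filter.1 hlF).1
    have halx : a l < x 0 := (Finset.mem_filter.1 hlF).2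
    have hlle : l ≤ q := Nat.lt_succ_iff.1 (Finset.mem_range.1 hlq1)
    have hlq : l < q := by
      rcases lt_or_eq_of_le hlle with h | h
      · exact h
      · exfalso; rw [h, haq] at halx; linarith
    have hl1 : x 0 ≤ a (l+1) := by
      by_contra hcon
      push_neg at hcon
      have : l + 1 ∈ F := Finset.mem_filter.2 ⟨Finset.mem_range.2 (by omega), hcon⟩
      have := F.le_max' _ this
      omega
    have hgap1 : a l + 2*ν < x 0 := by
      have := hbad l hlq1
      rw [abs_of_nonneg (by linarith)] at this
      linarith
    have hgap2 : x 0 + 2*ν < a (l+1) := by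
      have := hbad (l+1) (Finset.mem_range.2 (by omega))
      rw [abs_of_nonpos (by linarith)] at this
      linarith
    have hIoo : ∀ j, x j ∈ Ioo (a l) (a (l+1)) := by
      intro j
      have := abs_le.1 (hsync0 j)
      exact ⟨by linarith [this.1], by linarith [this.2]⟩
    obtain ⟨g, hgc, hgeq⟩ := hgex l hlq
    refine ⟨hcube, fun i j hij => ?_⟩
    have hTsync : |coupledMap (m+1) γ T x i - coupledMap (m+1) γ T x j| ≤ ν :=
      hpre.2 i j hij
    have hγ1 : (0:ℝ) < 1 - γ := by linarith [hγ.2]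
    have hdiffc : coupledMap (m+1) γ T x i - coupledMap (m+1) γ T x j
        = (1-γ)*(T (x i) - T (x j)) := by
      simp only [coupledMap]; ring
    rw [hdiffc, abs_mul, abs_of_pos hγ1] at hTsync
    have hmvt : |x i - x j| ≤ lam * |T (x i) - T (x j)| :=
      mvt_expansion hlam.1 g hgc hgeq (hder l hlq) (hIoo i) (hIoo j)
    have hT : |T (x i) - T (x j)| ≤ ν / (1 - γ) := by
      rw [le_div_iff₀ hγ1]; linarith
    calc |x i - x j| ≤ lam * (ν / (1 - γ)) :=
          le_trans hmvt (mul_le_mul_of_nonneg_left hT hlam.1.le)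
      _ = lam * ν / (1 - γ) := by ring

lemma ofReal_helper1 {A B : ℝ} (k : ℕ) (hA : 0 ≤ A) (hB : 0 ≤ B) (m : ℕ) :
    ENNReal.ofReal A * ((k : ℝ≥0∞) * ENNReal.ofReal B ^ m)
      = ENNReal.ofReal (A * ((k:ℝ) * B ^ m)) := by
  rw [ENNReal.ofReal_mul hA, ENNReal.ofReal_mul (by positivity),
    ENNReal.ofReal_pow hB, ENNReal.ofReal_natCast]

lemma ofReal_helper2 {A B C : ℝ} (k : ℕ) (hA : 0 ≤ A) (hB : 0 ≤ B) (hC : 0 ≤ C) (m : ℕ) :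
    ENNReal.ofReal A * ((k : ℝ≥0∞) * (ENNReal.ofReal B * ENNReal.ofReal C ^ m))
      = ENNReal.ofReal (A * ((k:ℝ) * (B * C ^ m))) := by
  rw [ENNReal.ofReal_mul hA, ENNReal.ofReal_mul (by positivity),
    ENNReal.ofReal_mul hB, ENNReal.ofReal_pow hC, ENNReal.ofReal_natCast]


lemma ofReal_helper3 {A B C : ℝ} (hA : 0 ≤ A) (hB : 0 ≤ B) (hC : 0 ≤ C) (m : ℕ) :
    ENNReal.ofReal A * (ENNReal.ofReal B * ENNReal.ofReal C ^ m)
      = ENNReal.ofReal (A * (B * C ^ m)) := by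
  rw [ENNReal.ofReal_mul hA, ENNReal.ofReal_mul hB, ENNReal.ofReal_pow hC]

/-- upper bound on the limsup, as `ν → 0⁺`, of the ratio
`μ(S_ν ∩ T̂⁻¹ S_ν) / μ(S_ν)` by `λ^{n-1}·‖h‖_∞ / ((1-γ)^{n-1}·h_inf)`. -/
theorem sync_ratio_limsup_le
    (n : ℕ) (hn : 2 ≤ n) (lam γ : ℝ)
    (hlam : lam ∈ Ioo (0:ℝ) 1) (hγ : γ ∈ Ico (0:ℝ) 1) (hlamγ : lam < 1 - γ)
    (T : ℝ → ℝ) (hT : Set.MapsTo T (Icc 0 1) (Icc 0 1))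
    (hpw : ∃ q a, PiecewiseC2Expanding T lam q a)
    (h : (Fin n → ℝ) → ℝ) (hmeas : Measurable h)
    (hnonneg : ∀ x ∈ unitCube n, 0 ≤ h x) (K : ℝ) (hbdd : ∀ x ∈ unitCube n, h x ≤ K)
    (hinf_pos : 0 < essInf h (volume.restrict (unitCube n))) :
    Filter.limsup
      (fun ν : ℝ =>
        ((densityMeasure n h)
            (syncSet n ν ∩ (coupledMap n γ T) ⁻¹' (syncSet n ν))).toReal /
          ((densityMeasure n h) (syncSet n ν)).toReal)
      (nhdsWithin 0 (Ioi 0))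
      ≤ lam ^ (n - 1) * essSup h (volume.restrict (unitCube n)) /
        ((1 - γ) ^ (n - 1) * essInf h (volume.restrict (unitCube n))) := by
  obtain ⟨q, a, hpwqa⟩ := hpw
  obtain ⟨m, rfl⟩ : ∃ m, n = m + 1 := ⟨n - 1, by omega⟩
  simp only [Nat.add_sub_cancel]
  set cube := unitCube (m+1) with hcube_def
  set μ := densityMeasure (m+1) h with hμ_def
  set EI := essInf h (volume.restrict cube) with hEI_def
  set ES := essSup h (volume.restrict cube) with hES_def
  have hγ1 : (0:ℝ) < 1 - γ := by linarith [hγ.2]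
  have hlam0 : (0:ℝ) < lam := hlam.1
  -- a.e. facts
  have haemem : ∀ᵐ x ∂(volume.restrict cube), x ∈ cube :=
    ae_restrict_mem (measurableSet_unitCube (m+1))
  have haeK : ∀ᵐ x ∂(volume.restrict cube), h x ≤ K :=
    haemem.mono fun x hx => hbdd x hx
  have hae0 : ∀ᵐ x ∂(volume.restrict cube), 0 ≤ h x :=
    haemem.mono fun x hx => hnonneg x hx
  have hbU : IsBoundedUnder (· ≤ ·) (ae (volume.restrict cube)) h := ⟨K, eventually_map.2 haeK⟩
  have hbL : IsBoundedUnder (· ≥ ·) (ae (volume.restrict cube)) h := ⟨0, eventually_map.2 hae0⟩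
  have hES_ae : ∀ᵐ x ∂(volume.restrict cube), h x ≤ ES := ae_le_essSup hbU
  have hEI_ae : ∀ᵐ x ∂(volume.restrict cube), EI ≤ h x := ae_essInf_le hbL
  have hEIpos : 0 < EI := hinf_pos
  have hne : (volume.restrict cube) ≠ 0 := by
    intro hc
    have : (volume.restrict cube) Set.univ = 0 := by rw [hc]; rfl
    rw [Measure.restrict_apply_univ, volume_unitCube] at this
    exact one_ne_zero this
  have : NeBot (ae (volume.restrict cube)) := ae_neBot.2 hne
  obtain ⟨x₀, hx₀⟩ := (hEI_ae.and hES_ae).exists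
  have hESpos : 0 < ES := lt_of_lt_of_le hEIpos (le_trans hx₀.1 hx₀.2)
  -- finiteness of μ
  have hμfin : ∀ s, μ s ≠ ⊤ := by
    intro s
    refine ne_top_of_le_ne_top ?_ (measure_mono (subset_univ s))
    have := densityMeasure_le (m+1) h hES_ae MeasurableSet.univ
    rw [univ_inter, volume_unitCube] at this
    rw [hμ_def]
    exact ne_top_of_le_ne_top (by simp [ENNReal.mul_ne_top]) this
  set c : ℝ := lam / (1 - γ) with hc_def
  set C : ℝ := ((q+1 : ℕ) : ℝ) * 4 * 2 ^ m with hC_def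
  set M : ℝ := ((m+1 : ℕ) : ℝ) with hM_def
  have hMpos : 0 < M := by rw [hM_def]; positivity
  set f : ℝ → ℝ := fun ν => ES * (M * c ^ m + C * ν) / (EI * (M * (1 - ν))) with hf_def
  -- key pointwise bound
  have key : ∀ ν ∈ Ioo (0:ℝ) 1,
      (μ (syncSet (m+1) ν ∩ (coupledMap (m+1) γ T) ⁻¹' (syncSet (m+1) ν))).toReal /
        (μ (syncSet (m+1) ν)).toReal ≤ f ν := by
    intro ν hν
    obtain ⟨hν0, hν1⟩ := hν
    set ν' : ℝ := lam * ν / (1 - γ) with hν'_def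
    have hν'0 : 0 ≤ ν' := by positivity
    -- Denominator lower bound
    have hvolB : ∀ i : Fin (m+1), volume (slab m i (Icc 0 (1-ν)) (fun t => Ioc t (t+ν)))
        = ENNReal.ofReal (1-ν) * ENNReal.ofReal ν ^ m := by
      intro i
      rw [vol_slab m i measurableSet_Icc (hSm_Ioc ν) (fun t => vol_Ioc_slice t ν),
        Real.volume_Icc]
      norm_num
    have hBmeas : ∀ i : Fin (m+1),
        MeasurableSet (slab m i (Icc 0 (1-ν)) (fun t => Ioc t (t+ν))) :=
      fun i => slab_measurableSet m i measurableSet_Icc (hSm_Ioc ν)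
    have hUnionB : volume (⋃ i, slab m i (Icc 0 (1-ν)) (fun t => Ioc t (t+ν)))
        = ((m+1:ℕ) : ℝ≥0∞) * (ENNReal.ofReal (1-ν) * ENNReal.ofReal ν ^ m) := by
      rw [measure_iUnion (lowerSlab_disjoint m ν) hBmeas, tsum_fintype]
      simp [hvolB, Finset.sum_const, Finset.card_univ, nsmul_eq_mul]
    have hDlow : ENNReal.ofReal (EI * (M * ((1-ν) * ν ^ m))) ≤ μ (syncSet (m+1) ν) := by
      calc ENNReal.ofReal (EI * (M * ((1-ν) * ν ^ m)))
          = ENNReal.ofReal EI * (((m+1:ℕ) : ℝ≥0∞) *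
              (ENNReal.ofReal (1-ν) * ENNReal.ofReal ν ^ m)) := by
            rw [ofReal_helper2 (m+1) hEIpos.le (by linarith) hν0.le m]
        _ = ENNReal.ofReal EI * volume (⋃ i, slab m i (Icc 0 (1-ν)) (fun t => Ioc t (t+ν))) := by
            rw [hUnionB]
        _ ≤ ENNReal.ofReal EI * volume (syncSet (m+1) ν) := by
            refine mul_le_mul_right (measure_mono ?_) _
            exact iUnion_subset fun i => lowerSlab_subset_syncSet m hν0 i
        _ ≤ μ (syncSet (m+1) ν) := by
            rw [hμ_def]
            exact le_densityMeasure (m+1) h hEI_ae (measurableSet_syncSet (m+1) ν)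
              (syncSet_subset_unitCube (m+1) ν)
    have hDL_pos : 0 < EI * (M * ((1-ν) * ν ^ m)) := by
      have : (0:ℝ) < 1 - ν := by linarith
      positivity
    have hDtoReal : EI * (M * ((1-ν) * ν ^ m)) ≤ (μ (syncSet (m+1) ν)).toReal := by
      have := ENNReal.toReal_mono (hμfin _) hDlow
      rwa [ENNReal.toReal_ofReal hDL_pos.le] at this
    -- Numerator upper bound
    have hA1vol : volume (syncSet (m+1) ν') ≤ ((m+1:ℕ) : ℝ≥0∞) * ENNReal.ofReal ν' ^ m := by
      calc volume (syncSet (m+1) ν')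
          ≤ volume (⋃ i, slab m i (Icc 0 1) (fun t => Icc (t + 0) (t + ν'))) :=
            measure_mono (syncSet_subset_iUnion_slab m ν')
        _ ≤ ∑ i : Fin (m+1), volume (slab m i (Icc 0 1) (fun t => Icc (t + 0) (t + ν'))) :=
            measure_iUnion_fintype_le _ _
        _ = ((m+1:ℕ) : ℝ≥0∞) * ENNReal.ofReal ν' ^ m := by
            have heach : ∀ i : Fin (m+1),
                volume (slab m i (Icc 0 1) (fun t => Icc (t + 0) (t + ν')))
                = ENNReal.ofReal ν' ^ m := by
              intro i
              rw [vol_slab m i measurableSet_Icc (hSm_Icc 0 ν')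
                (V := ENNReal.ofReal ν')
                (fun t => by rw [vol_Icc_slice t 0 ν', sub_zero]), Real.volume_Icc]
              norm_num
            rw [Finset.sum_congr rfl fun i _ => heach i, Finset.sum_const,
              Finset.card_univ, Fintype.card_fin, nsmul_eq_mul]
    have hA1 : μ (syncSet (m+1) ν') ≤ ENNReal.ofReal (ES * (M * ν' ^ m)) := by
      calc μ (syncSet (m+1) ν')
          ≤ ENNReal.ofReal ES * volume (syncSet (m+1) ν' ∩ cube) := by
            rw [hμ_def]
            exact densityMeasure_le (m+1) h hES_ae (measurableSet_syncSet (m+1) ν')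
        _ ≤ ENNReal.ofReal ES * (((m+1:ℕ) : ℝ≥0∞) * ENNReal.ofReal ν' ^ m) :=
            mul_le_mul_right (le_trans (measure_mono inter_subset_left) hA1vol) _
        _ = ENNReal.ofReal (ES * (M * ν' ^ m)) := ofReal_helper1 (m+1) hESpos.le hν'0 m
    have hslabvol : ∀ l, volume (slab m 0 (Icc (a l - 2*ν) (a l + 2*ν))
        (fun t => Icc (t + -ν) (t + ν)))
        = ENNReal.ofReal (4*ν) * ENNReal.ofReal (2*ν) ^ m := by
      intro l
      rw [vol_slab m 0 measurableSet_Icc (hSm_Icc (-ν) ν)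
        (V := ENNReal.ofReal (2*ν))
        (fun t => by rw [vol_Icc_slice t (-ν) ν, show ν - -ν = 2*ν by ring]),
        Real.volume_Icc, show a l + 2*ν - (a l - 2*ν) = 4*ν by ring]
    have hA2 : μ (⋃ l ∈ Finset.range (q+1), slab m 0 (Icc (a l - 2*ν) (a l + 2*ν))
        (fun t => Icc (t + -ν) (t + ν))) ≤ ENNReal.ofReal (((q+1:ℕ):ℝ) * (ES * (4*ν*(2*ν) ^ m))) := by
      calc μ (⋃ l ∈ Finset.range (q+1), slab m 0 (Icc (a l - 2*ν) (a l + 2*ν))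
            (fun t => Icc (t + -ν) (t + ν)))
          ≤ ∑ l ∈ Finset.range (q+1), μ (slab m 0 (Icc (a l - 2*ν) (a l + 2*ν))
              (fun t => Icc (t + -ν) (t + ν))) := measure_biUnion_finset_le _ _
        _ ≤ ∑ l ∈ Finset.range (q+1), ENNReal.ofReal (ES * (4*ν*(2*ν) ^ m)) := by
            refine Finset.sum_le_sum fun l _ => ?_
            calc μ (slab m 0 (Icc (a l - 2*ν) (a l + 2*ν)) (fun t => Icc (t + -ν) (t + ν)))
                ≤ ENNReal.ofReal ES * volume ((slab m 0 (Icc (a l - 2*ν) (a l + 2*ν))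
                    (fun t => Icc (t + -ν) (t + ν))) ∩ cube) := by
                  rw [hμ_def]
                  exact densityMeasure_le (m+1) h hES_ae
                    (slab_measurableSet m 0 measurableSet_Icc (hSm_Icc (-ν) ν))
              _ ≤ ENNReal.ofReal ES * (ENNReal.ofReal (4*ν) * ENNReal.ofReal (2*ν) ^ m) := by
                  refine mul_le_mul_right ?_ _
                  rw [← hslabvol l]
                  exact measure_mono inter_subset_left
              _ = ENNReal.ofReal (ES * (4*ν*(2*ν) ^ m)) :=
                  ofReal_helper3 hESpos.le (by positivity) (by positivity) m
        _ = ENNReal.ofReal (((q+1:ℕ):ℝ) * (ES * (4*ν*(2*ν) ^ m))) := by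
            rw [Finset.sum_const, Finset.card_range, nsmul_eq_mul,
              ← ENNReal.ofReal_natCast (q+1), ← ENNReal.ofReal_mul (by positivity)]
    have hNup : (μ (syncSet (m+1) ν ∩ (coupledMap (m+1) γ T) ⁻¹' (syncSet (m+1) ν))).toReal
        ≤ ES * (M * ν' ^ m) + ((q+1:ℕ):ℝ) * (ES * (4*ν*(2*ν) ^ m)) := by
      refine ENNReal.toReal_le_of_le_ofReal (by positivity) ?_
      calc μ (syncSet (m+1) ν ∩ (coupledMap (m+1) γ T) ⁻¹' (syncSet (m+1) ν))
          ≤ μ (syncSet (m+1) ν' ∪ ⋃ l ∈ Finset.range (q+1),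
              slab m 0 (Icc (a l - 2*ν) (a l + 2*ν)) (fun t => Icc (t + -ν) (t + ν))) :=
            measure_mono (numerator_subset m q a hlam hγ hν0 hpwqa)
        _ ≤ μ (syncSet (m+1) ν') + μ (⋃ l ∈ Finset.range (q+1),
              slab m 0 (Icc (a l - 2*ν) (a l + 2*ν)) (fun t => Icc (t + -ν) (t + ν))) :=
            measure_union_le _ _
        _ ≤ ENNReal.ofReal (ES * (M * ν' ^ m)) +
              ENNReal.ofReal (((q+1:ℕ):ℝ) * (ES * (4*ν*(2*ν) ^ m))) := add_le_add hA1 hA2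
        _ = ENNReal.ofReal (ES * (M * ν' ^ m) + ((q+1:ℕ):ℝ) * (ES * (4*ν*(2*ν) ^ m))) :=
            (ENNReal.ofReal_add (by positivity) (by positivity)).symm
    -- divide
    have hratio : (μ (syncSet (m+1) ν ∩ (coupledMap (m+1) γ T) ⁻¹' (syncSet (m+1) ν))).toReal /
        (μ (syncSet (m+1) ν)).toReal
          ≤ (ES * (M * ν' ^ m) + ((q+1:ℕ):ℝ) * (ES * (4*ν*(2*ν) ^ m))) /
            (EI * (M * ((1-ν) * ν ^ m))) :=
      div_le_div₀ (by positivity) hNup hDL_pos hDtoReal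
    refine le_trans hratio (le_of_eq ?_)
    have hν'm : ν' ^ m = c ^ m * ν ^ m := by
      rw [show ν' = c * ν by rw [hν'_def, hc_def]; ring, mul_pow]
    have h2ν : (2*ν) ^ m = 2 ^ m * ν ^ m := by rw [mul_pow]
    rw [hf_def]
    have hnum : ES * (M * ν' ^ m) + ((q+1:ℕ):ℝ) * (ES * (4*ν*(2*ν) ^ m))
        = ν ^ m * (ES * (M * c ^ m + C * ν)) := by
      rw [hν'm, h2ν, hC_def]; ring
    have hden : EI * (M * ((1-ν) * ν ^ m)) = ν ^ m * (EI * (M * (1 - ν))) := by ring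
    rw [hnum, hden, mul_div_mul_left _ _ (pow_ne_zero m hν0.ne')]
  -- limit of f
  have hL : f 0 = lam ^ m * ES / ((1 - γ) ^ m * EI) := by
    rw [hf_def]
    simp only [mul_zero, add_zero, sub_zero, mul_one]
    rw [hc_def, div_pow]
    field_simp
  have htend : Tendsto f (nhdsWithin 0 (Ioi 0)) (nhds (lam ^ m * ES / ((1 - γ) ^ m * EI))) := by
    rw [← hL]
    refine Tendsto.mono_left ?_ nhdsWithin_le_nhds
    refine ContinuousAt.tendsto ?_
    refine ContinuousAt.div (by fun_prop) (by fun_prop) ?_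
    simp only [sub_zero, mul_one]
    positivity
  have hev : ∀ᶠ ν in nhdsWithin (0:ℝ) (Ioi 0),
      (μ (syncSet (m+1) ν ∩ (coupledMap (m+1) γ T) ⁻¹' (syncSet (m+1) ν))).toReal /
        (μ (syncSet (m+1) ν)).toReal ≤ f ν := by
    filter_upwards [Ioo_mem_nhdsGT_of_mem (show (0:ℝ) ∈ Ico (0:ℝ) 1 by norm_num)] with ν hν
    exact key ν hν
  have hco : IsCoboundedUnder (· ≤ ·) (nhdsWithin (0:ℝ) (Ioi 0))
      (fun ν => (μ (syncSet (m+1) ν ∩ (coupledMap (m+1) γ T) ⁻¹' (syncSet (m+1) ν))).toReal /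
        (μ (syncSet (m+1) ν)).toReal) := by
    refine isCoboundedUnder_le_of_eventually_le _ (x := 0) ?_
    exact Eventually.of_forall fun ν => by positivity
  refine le_trans (limsup_le_limsup hev hco htend.isBoundedUnder_le) ?_
  rw [htend.limsup_eq]
end

section
/- Let n ≥ 3. There exists a constant C_n > 0, depending only on n, such that for all 0 < ε < ν ≤ 1, the Lebesgue measure of B_ε(D_ν) ∩ B_ε(S_ν) is at most C_n·ε·ν, where S_ν = {x ∈ [0,1]^n : |x_i − x_j| ≤ ν for all i ≠ j}, D_ν = [0,1]^n ∖ S_ν, and B_ε(A) = {x ∈ ℝ^n : dist(x, A) ≤ ε} is the closed ε-neighborhood with respect to the Euclidean distance. -/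
open MeasureTheory Set
open ENNReal

lemma coord_abs_le_dist {n : ℕ} (x y : EuclideanSpace ℝ (Fin n)) (k : Fin n) :
    |x k - y k| ≤ dist x y := by
  rw [EuclideanSpace.dist_eq, ← Real.sqrt_sq_eq_abs]
  apply Real.sqrt_le_sqrt
  have := Finset.single_le_sum (f := fun i => dist (x i) (y i) ^ 2)
    (fun i _ => sq_nonneg _) (Finset.mem_univ k)
  simpa [Real.dist_eq, sq_abs] using this

lemma volume_box {n : ℕ} (lo hi : Fin n → ℝ) :
    volume {x : EuclideanSpace ℝ (Fin n) | ∀ k, x k ∈ Icc (lo k) (hi k)} =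
      ∏ k, ENNReal.ofReal (hi k - lo k) := by
  have hmp := EuclideanSpace.volume_preserving_symm_measurableEquiv_toLp (Fin n)
  have hset : {x : EuclideanSpace ℝ (Fin n) | ∀ k, x k ∈ Icc (lo k) (hi k)} =
      (MeasurableEquiv.toLp 2 (Fin n → ℝ)).symm ⁻¹' (Set.pi univ fun k => Icc (lo k) (hi k)) := by
    ext x
    simp only [Set.mem_preimage, Set.mem_pi, Set.mem_univ, forall_true_left, mem_setOf_eq]
    rfl
  rw [hset, hmp.measure_preimage_equiv, volume_pi_pi]
  simp [Real.volume_Icc]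

lemma exists_near_of_mem_cthickening {n : ℕ} {A : Set (EuclideanSpace ℝ (Fin n))}
    {ε : ℝ} (hε : 0 < ε) {x : EuclideanSpace ℝ (Fin n)}
    (hx : x ∈ Metric.cthickening ε A) : ∃ y ∈ A, dist x y < 2 * ε := by
  have h1 : EMetric.infEdist x A ≤ ENNReal.ofReal ε := Metric.mem_cthickening_iff.mp hx
  have h2 : EMetric.infEdist x A < ENNReal.ofReal (2 * ε) :=
    lt_of_le_of_lt h1 ((ENNReal.ofReal_lt_ofReal_iff (by linarith)).mpr (by linarith))
  obtain ⟨y, hyA, hy⟩ := EMetric.infEdist_lt_iff.mp h2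
  exact ⟨y, hyA, (edist_lt_ofReal).mp hy⟩


/-- The unit cube `[0,1]^n` inside Euclidean `ℝ^n`. -/
def unitCubeE (n : ℕ) : Set (EuclideanSpace ℝ (Fin n)) := {x | ∀ i, x i ∈ Icc (0:ℝ) 1}

/-- The synchronization neighborhood `S_ν = {x ∈ [0,1]^n : |x_i − x_j| ≤ ν ∀ i ≠ j}`. -/
def syncSetE (n : ℕ) (ν : ℝ) : Set (EuclideanSpace ℝ (Fin n)) :=
  {x ∈ unitCubeE n | ∀ i j, i ≠ j → |x i - x j| ≤ ν}

/-- for `n ≥ 3` there is a constant `C_n > 0` such that for all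
`0 < ε < ν ≤ 1`, `Leb(B_ε(D_ν) ∩ B_ε(S_ν)) ≤ C_n·ε·ν`, where `D_ν = [0,1]^n ∖ S_ν`
and `B_ε(·)` is the closed `ε`-neighborhood for the Euclidean distance. -/
theorem measure_thickening_inter_le (n : ℕ) (hn : 3 ≤ n) :
    ∃ C : ℝ, 0 < C ∧ ∀ ε ν : ℝ, 0 < ε → ε < ν → ν ≤ 1 →
      volume (Metric.cthickening ε (unitCubeE n \ syncSetE n ν) ∩
          Metric.cthickening ε (syncSetE n ν)) ≤
        ENNReal.ofReal (C * ε * ν) := by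
  refine ⟨(n : ℝ)^2 * (54 * 11 ^ (n - 2)), by positivity, ?_⟩
  intro ε ν hε hεν hν1
  have hν : 0 < ν := hε.trans hεν
  have hε1 : ε ≤ 1 := le_trans hεν.le hν1
  set M : ℕ := ⌊(5:ℝ)/ε⌋₊ + 1 with hM
  set len : Fin n → Fin n → Fin n → ℝ := fun i j k =>
    if k = j then ε else if k = i then 9*ε else 11*ν with hlen
  set lo : Fin n → Fin n → ℕ → Fin n → ℝ := fun i j m k =>
    (-2 + m*ε) + (if k = j then 0 else if k = i then ν - 4*ε else -(5*ν)) with hlo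
  set Box : Fin n → Fin n → ℕ → Set (EuclideanSpace ℝ (Fin n)) := fun i j m =>
    {x | ∀ k, x k ∈ Icc (lo i j m k) (lo i j m k + len i j k)} with hBox
  -- coverage
  have cover : Metric.cthickening ε (unitCubeE n \ syncSetE n ν) ∩
      Metric.cthickening ε (syncSetE n ν) ⊆
      ⋃ i, ⋃ j, ⋃ (_ : i ≠ j), ⋃ m ∈ Finset.range M, Box i j m := by
    rintro x ⟨hxD, hxS⟩
    obtain ⟨z, hzD, hzx⟩ := exists_near_of_mem_cthickening hε hxD
    obtain ⟨y, hyS, hyx⟩ := exists_near_of_mem_cthickening hε hxS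
    have hz : ∀ k, |x k - z k| < 2*ε := fun k => lt_of_le_of_lt (coord_abs_le_dist x z k) hzx
    have hy : ∀ k, |x k - y k| < 2*ε := fun k => lt_of_le_of_lt (coord_abs_le_dist x y k) hyx
    have hzC : z ∈ unitCubeE n := hzD.1
    have hns : ¬ (∀ i j, i ≠ j → |z i - z j| ≤ ν) := fun h => hzD.2 ⟨hzC, h⟩
    push_neg at hns
    obtain ⟨i0, j0, hij0, hgt⟩ := hns
    obtain ⟨i, j, hij, hzij⟩ : ∃ i j, i ≠ j ∧ ν < z i - z j := by
      rcases (lt_abs.mp hgt) with h | h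
      · exact ⟨i0, j0, hij0, h⟩
      · exact ⟨j0, i0, hij0.symm, by linarith⟩
    have hyj := abs_le.mp (hy j).le
    have hyj0 := (hyS.1 j).1
    have hyj1 := (hyS.1 j).2
    have hxj_lb : -2 ≤ x j := by linarith
    have hxj_ub : x j ≤ 3 := by linarith
    set m : ℕ := ⌊(x j + 2)/ε⌋₊ with hm
    have hm0 : (0:ℝ) ≤ (x j + 2)/ε := div_nonneg (by linarith) hε.le
    have hm1 : (m:ℝ) * ε ≤ x j + 2 := by
      have h := Nat.floor_le hm0
      calc (m:ℝ) * ε ≤ ((x j + 2)/ε) * ε := by nlinarith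
        _ = x j + 2 := by field_simp
    have hm2 : x j + 2 < ((m:ℝ) + 1) * ε := by
      have h := Nat.lt_floor_add_one ((x j + 2)/ε)
      calc x j + 2 = ((x j + 2)/ε) * ε := by field_simp
        _ < ((m:ℝ)+1) * ε := by nlinarith
    have hmM : m ∈ Finset.range M := by
      rw [Finset.mem_range, hM, Nat.lt_succ_iff]
      apply Nat.floor_mono
      rw [div_le_div_iff₀ hε hε]
      nlinarith
    simp only [mem_iUnion]
    refine ⟨i, j, hij, m, hmM, ?_⟩
    intro k
    simp only [hBox, hlo, hlen, mem_setOf_eq, mem_Icc]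
    by_cases hkj : k = j
    · subst hkj
      simp only [eq_self_iff_true, if_true]
      constructor
      · linarith
      · linarith
    · by_cases hki : k = i
      · subst hki
        simp only [if_neg hkj, eq_self_iff_true, if_true]
        have h1 := abs_le.mp (hz k).le
        have h2 := abs_le.mp (hz j).le
        have h4 := abs_le.mp (hyS.2 k j hkj)
        have h5 := abs_le.mp (hy k).le
        constructor
        · linarith
        · linarith
      · simp only [if_neg hkj, if_neg hki]
        have h3 := abs_le.mp (hyS.2 k j hkj)
        have h5 := abs_le.mp (hy k).le
        constructor
        · linarith
        · linarith
  -- per-pair volume bound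
  have perpair : ∀ i j : Fin n, i ≠ j →
      volume (⋃ m ∈ Finset.range M, Box i j m) ≤
        ENNReal.ofReal (54 * 11^(n-2) * ε * ν) := by
    intro i j hij
    have hboxvol : ∀ m : ℕ, volume (Box i j m) =
        ENNReal.ofReal (ε * (9*ε * (11*ν)^(n-2))) := by
      intro m
      rw [hBox]
      have hv := volume_box (lo i j m) (fun k => lo i j m k + len i j k)
      simp only [add_sub_cancel_left] at hv
      rw [hv]
      rw [← Finset.mul_prod_erase Finset.univ _ (Finset.mem_univ j)]
      have hij' : i ∈ Finset.univ.erase j := Finset.mem_erase.mpr ⟨hij, Finset.mem_univ i⟩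
      rw [← Finset.mul_prod_erase _ _ hij']
      have h3 : ∀ k ∈ (Finset.univ.erase j).erase i,
          ENNReal.ofReal (len i j k) = ENNReal.ofReal (11*ν) := by
        intro k hk
        rw [Finset.mem_erase] at hk
        obtain ⟨hki, hk2⟩ := hk
        rw [Finset.mem_erase] at hk2
        simp [hlen, hki, hk2.1]
      rw [Finset.prod_congr rfl h3, Finset.prod_const]
      have hcard : ((Finset.univ.erase j).erase i).card = n - 2 := by
        rw [Finset.card_erase_of_mem hij', Finset.card_erase_of_mem (Finset.mem_univ j),
          Finset.card_univ, Fintype.card_fin]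
        omega
      have h1 : len i j j = ε := by simp [hlen]
      have h2 : len i j i = 9*ε := by simp [hlen, hij]
      rw [hcard, h1, h2]
      rw [← ENNReal.ofReal_pow (by positivity), ← ENNReal.ofReal_mul (by positivity),
        ← ENNReal.ofReal_mul hε.le]
    calc volume (⋃ m ∈ Finset.range M, Box i j m)
        ≤ ∑ m ∈ Finset.range M, volume (Box i j m) := measure_biUnion_finset_le _ _
      _ = (M : ℝ≥0∞) * ENNReal.ofReal (ε * (9*ε*(11*ν)^(n-2))) := by
          simp only [hboxvol, Finset.sum_const, Finset.card_range, nsmul_eq_mul]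
      _ ≤ ENNReal.ofReal (6/ε) * ENNReal.ofReal (ε * (9*ε*(11*ν)^(n-2))) := by
          apply mul_le_mul_left
          have hMle : (M:ℝ) ≤ 6/ε := by
            have h1 : (⌊(5:ℝ)/ε⌋₊ : ℝ) ≤ 5/ε := Nat.floor_le (by positivity)
            have h2 : (1:ℝ) ≤ 1/ε := by rw [le_div_iff₀ hε]; linarith
            have h3 : 5/ε + 1/ε = 6/ε := by ring
            push_cast [hM]
            linarith
          calc (M : ℝ≥0∞) = ENNReal.ofReal (M:ℝ) := (ENNReal.ofReal_natCast M).symm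
            _ ≤ ENNReal.ofReal (6/ε) := ENNReal.ofReal_le_ofReal hMle
      _ = ENNReal.ofReal (6/ε * (ε * (9*ε*(11*ν)^(n-2)))) :=
          (ENNReal.ofReal_mul (by positivity)).symm
      _ ≤ ENNReal.ofReal (54 * 11^(n-2) * ε * ν) := by
          apply ENNReal.ofReal_le_ofReal
          have hpow : ν^(n-2) ≤ ν := by
            calc ν^(n-2) ≤ ν^1 := pow_le_pow_of_le_one hν.le hν1 (by omega)
              _ = ν := pow_one ν
          have heq : 6/ε * (ε * (9*ε*(11*ν)^(n-2))) = 54 * 11^(n-2) * ε * ν^(n-2) := by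
            rw [mul_pow]
            field_simp
            ring
          rw [heq]
          have hc : (0:ℝ) ≤ 54 * 11^(n-2) * ε := by positivity
          calc 54 * 11^(n-2) * ε * ν^(n-2) ≤ 54 * 11^(n-2) * ε * ν := by nlinarith
            _ = 54 * 11^(n-2) * ε * ν := rfl
  -- assemble
  calc volume (Metric.cthickening ε (unitCubeE n \ syncSetE n ν) ∩
          Metric.cthickening ε (syncSetE n ν))
      ≤ volume (⋃ i, ⋃ j, ⋃ (_ : i ≠ j), ⋃ m ∈ Finset.range M, Box i j m) :=
        measure_mono cover
    _ ≤ ∑ i : Fin n, volume (⋃ j, ⋃ (_ : i ≠ j), ⋃ m ∈ Finset.range M, Box i j m) :=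
        measure_iUnion_fintype_le _ _
    _ ≤ ∑ i : Fin n, ∑ j : Fin n, volume (⋃ (_ : i ≠ j), ⋃ m ∈ Finset.range M, Box i j m) :=
        Finset.sum_le_sum fun i _ => measure_iUnion_fintype_le _ _
    _ ≤ ∑ _i : Fin n, ∑ _j : Fin n, ENNReal.ofReal (54 * 11^(n-2) * ε * ν) := by
        refine Finset.sum_le_sum fun i _ => Finset.sum_le_sum fun j _ => ?_
        by_cases hij : i = j
        · subst hij
          simp
        · exact le_trans (measure_mono (iUnion_subset fun _ => subset_rfl)) (perpair i j hij)
    _ = ((n*n : ℕ) : ℝ≥0∞) * ENNReal.ofReal (54 * 11^(n-2) * ε * ν) := by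
        simp [Finset.sum_const, Finset.card_univ, nsmul_eq_mul, mul_assoc]
    _ = ENNReal.ofReal ((n*n : ℕ) * (54 * 11^(n-2) * ε * ν)) := by
        rw [← ENNReal.ofReal_natCast, ← ENNReal.ofReal_mul (by positivity)]
    _ ≤ ENNReal.ofReal ((n : ℝ)^2 * (54 * 11 ^ (n - 2)) * ε * ν) := by
        apply ENNReal.ofReal_le_ofReal
        apply le_of_eq
        push_cast
        ring
end
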